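/- Let A_* be a Banach space, A = (A_*)^*, and let F ⊆ A^* be a closed subspace containing the canonical image of A_* such that F/A_* is one-dimensional. Let E ⊆ F be a closed subspace which is a predual for A (i.e., the canonical map A → E^* is an isomorphism). Then the annihilator E^⊥ = { M ∈ F^* : ⟨M, μ⟩ = 0 for all μ ∈ E } is one-dimensional. -/

import Mathlib

open NormedSpace

noncomputable instance annihilatorAuxACG {A₀ : Type*} [NormedAddCommGroup A₀] [NormedSpace ℂ A₀]
    (F : Submodule ℂ (StrongDual ℂ (StrongDual ℂ A₀))) : AddCommGroup F :=
  @Submodule.addCommGroup ℂ _ _ ContinuousLinearMap.addCommGroup _ F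

set_option maxHeartbeats 2000000 in
set_option synthInstance.maxHeartbeats 400000 in

/-- Let `A₀` be a Banach space, `A = A₀^*`, and `F ⊆ A^*` a closed subspace containing the
canonical image of `A₀` with `F/A₀` one-dimensional.  If `E ⊆ F` is a closed subspace which is
a predual for `A` (the canonical evaluation map `A → E^*` is bijective, hence an isomorphism),
then the annihilator `E^⊥ = {M ∈ F^* : M|_E = 0}` is one-dimensional. -/
theorem annihilator_one_dimensional {A₀ : Type*} [NormedAddCommGroup A₀] [NormedSpace ℂ A₀]
    [CompleteSpace A₀]
    (F : Submodule ℂ (StrongDual ℂ (StrongDual ℂ A₀)))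
    (hFclosed : IsClosed (F : Set (StrongDual ℂ (StrongDual ℂ A₀))))
    (hsub : LinearMap.range (inclusionInDoubleDual ℂ A₀ :
      A₀ →ₗ[ℂ] StrongDual ℂ (StrongDual ℂ A₀)) ≤ F)
    (hquot : Module.rank ℂ
      (F ⧸ (LinearMap.range (inclusionInDoubleDual ℂ A₀ :
        A₀ →ₗ[ℂ] StrongDual ℂ (StrongDual ℂ A₀))).comap F.subtype) = 1)
    (E : Submodule ℂ (StrongDual ℂ (StrongDual ℂ A₀)))
    (hEF : E ≤ F)
    (hEclosed : IsClosed (E : Set (StrongDual ℂ (StrongDual ℂ A₀))))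
    (hpre : Function.Bijective (fun a : StrongDual ℂ A₀ =>
      ((inclusionInDoubleDual ℂ (StrongDual ℂ A₀)) a).comp E.subtypeL)) :
    ∃ M₀ : StrongDual ℂ F, M₀ ≠ 0 ∧ (∀ μ : E, M₀ ⟨μ.1, hEF μ.2⟩ = 0) ∧
      ∀ M : StrongDual ℂ F, (∀ μ : E, M ⟨μ.1, hEF μ.2⟩ = 0) → ∃ c : ℂ, M = c • M₀ := by
  classical
  set ι := inclusionInDoubleDual ℂ A₀ with hι
  set A₀' : Submodule ℂ F := (LinearMap.range (ι : A₀ →ₗ[ℂ] StrongDual ℂ (StrongDual ℂ A₀))).comap F.subtype with hA₀'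
  -- the image of A₀ is closed
  have hrange_closed : IsClosed ((LinearMap.range (ι : A₀ →ₗ[ℂ] StrongDual ℂ (StrongDual ℂ A₀)) : Submodule ℂ _) :
      Set (StrongDual ℂ (StrongDual ℂ A₀))) := by
    have h1 : (LinearMap.range (ι : A₀ →ₗ[ℂ] StrongDual ℂ (StrongDual ℂ A₀)) : Set (StrongDual ℂ (StrongDual ℂ A₀))) =
        Set.range (inclusionInDoubleDualLi ℂ (E := A₀)) := by
      ext x
      constructor
      · rintro ⟨y, rfl⟩; exact ⟨y, rfl⟩
      · rintro ⟨y, rfl⟩; exact ⟨y, rfl⟩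
    rw [h1]
    have hiso : Isometry (inclusionInDoubleDualLi ℂ (E := A₀)) :=
      (inclusionInDoubleDualLi ℂ (E := A₀)).isometry
    exact hiso.isClosedEmbedding.isClosed_range
  haveI hA₀closed : IsClosed (A₀' : Set F) := by
    have h2 : (A₀' : Set F) =
        F.subtype ⁻¹' ((LinearMap.range (ι : A₀ →ₗ[ℂ] StrongDual ℂ (StrongDual ℂ A₀)) : Submodule ℂ _) : Set (StrongDual ℂ (StrongDual ℂ A₀))) := rfl
    rw [h2]
    exact hrange_closed.preimage continuous_subtype_val
  -- the continuous quotient map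
  let mkQL : F →L[ℂ] (F ⧸ A₀') := ⟨A₀'.mkQ, continuous_quot_mk⟩
  -- a spanning vector of the quotient
  obtain ⟨v, hv0, hvspan⟩ := rank_eq_one_iff.mp hquot
  obtain ⟨f₀, hf₀⟩ := Submodule.Quotient.mk_surjective A₀' v
  -- every f differs from a multiple of f₀ by an element of A₀'
  have hrep : ∀ f : F, ∃ c : ℂ, f - c • f₀ ∈ A₀' := by
    intro f
    obtain ⟨c, hc⟩ := hvspan (Submodule.Quotient.mk f)
    refine ⟨c, ?_⟩
    rw [← Submodule.Quotient.mk_eq_zero, Submodule.Quotient.mk_sub,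
      Submodule.Quotient.mk_smul, hf₀, hc, sub_self]
  -- the functional Λ vanishing on A₀' and nonzero at f₀
  letI iF : SeminormedAddCommGroup F := SeminormedAddCommGroup.induced F (StrongDual ℂ (StrongDual ℂ A₀))
    ({ toFun := fun x => x.1, map_zero' := rfl, map_add' := fun _ _ => rfl } :
      F →+ StrongDual ℂ (StrongDual ℂ A₀))
  letI : NormedSpace ℂ F := NormedSpace.induced ℂ F (StrongDual ℂ (StrongDual ℂ A₀))
    ({ toFun := fun x => x.1, map_add' := fun _ _ => rfl, map_smul' := fun _ _ => rfl } :
      F →ₗ[ℂ] StrongDual ℂ (StrongDual ℂ A₀))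
  obtain ⟨g, -, hg⟩ := exists_dual_vector ℂ v (norm_ne_zero_iff.mpr hv0)
  set Λ : StrongDual ℂ F := g.comp mkQL with hΛdef
  have hmkQL : ∀ f : F, mkQL f = Submodule.Quotient.mk f := fun _ => rfl
  have hΛ0 : ∀ f ∈ A₀', Λ f = 0 := by
    intro f hf
    have h3 : mkQL f = 0 := by
      rw [hmkQL]; exact (Submodule.Quotient.mk_eq_zero A₀').2 hf
    simp only [hΛdef, ContinuousLinearMap.comp_apply, h3, map_zero]
  have hΛf₀ : Λ f₀ ≠ 0 := by
    have h4 : Λ f₀ = (‖v‖ : ℂ) := by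
      simp only [hΛdef, ContinuousLinearMap.comp_apply, hmkQL, hf₀, hg]
      norm_cast
    rw [h4]
    intro h
    have h4' : ‖v‖ = 0 := by exact_mod_cast h
    exact hv0 (norm_eq_zero.mp h4')
  -- any functional vanishing on A₀' is determined by its value at f₀
  have hdet : ∀ (φ : StrongDual ℂ F), (∀ f ∈ A₀', φ f = 0) → ∀ f : F, ∀ c : ℂ,
      f - c • f₀ ∈ A₀' → φ f = c * φ f₀ := by
    intro φ hφ f c hc
    have h5 := hφ _ hc
    rwa [map_sub, map_smul, smul_eq_mul, sub_eq_zero] at h5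
  -- notation for the evaluation maps
  set ι' := inclusionInDoubleDual ℂ (StrongDual ℂ A₀) with hι'
  have hev : ∀ (a : StrongDual ℂ A₀) (f : StrongDual ℂ (StrongDual ℂ A₀)), ι' a f = f a := fun a f => rfl
  -- injectivity: a functional vanishing on E gives zero element of A
  have hinj : ∀ b : StrongDual ℂ A₀, (∀ μ : E, μ.1 b = 0) → b = 0 := by
    intro b hb
    apply hpre.1
    show (ι' b).comp E.subtypeL = (ι' 0).comp E.subtypeL
    ext μ
    simp only [ContinuousLinearMap.comp_apply, map_zero, ContinuousLinearMap.zero_apply]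
    exact hb μ
  -- the inclusion E → F as a continuous linear map
  let inclEF : E →L[ℂ] F :=
    ⟨Submodule.inclusion hEF, continuous_subtype_val.subtype_mk _⟩
  have hinclEF : ∀ μ : E, inclEF μ = ⟨μ.1, hEF μ.2⟩ := fun _ => rfl
  -- get a₁ with μ a₁ = Λ μ for μ ∈ E
  obtain ⟨a₁, ha₁⟩ := hpre.2 (Λ.comp inclEF)
  have ha₁' : ∀ μ : E, μ.1 a₁ = Λ ⟨μ.1, hEF μ.2⟩ := by
    intro μ
    have := congrArg (fun φ => φ μ) ha₁
    simpa [hev, hinclEF] using this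
  -- the distinguished annihilating functional
  refine ⟨Λ - (ι' a₁).comp F.subtypeL, ?_, ?_, ?_⟩
  · -- nonzero
    intro h
    have hΛeq : ∀ f : F, Λ f = f.1 a₁ := by
      intro f
      have := congrArg (fun φ : StrongDual ℂ F => φ f) h
      simp only [ContinuousLinearMap.sub_apply, ContinuousLinearMap.comp_apply,
        ContinuousLinearMap.zero_apply] at this
      have h6 : Λ f - (ι' a₁) (F.subtypeL f) = 0 := this
      rw [sub_eq_zero] at h6
      exact h6
    have ha₁0 : a₁ = 0 := by
      ext x
      have hx : (⟨ι x, hsub ⟨x, rfl⟩⟩ : F) ∈ A₀' := ⟨x, rfl⟩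
      have := hΛeq ⟨ι x, hsub ⟨x, rfl⟩⟩
      rw [hΛ0 _ hx] at this
      exact (this.symm.trans rfl).symm ▸ (by simpa [hev] using this.symm)
    apply hΛf₀
    rw [hΛeq f₀, ha₁0]
    simp
  · -- vanishes on E
    intro μ
    simp only [ContinuousLinearMap.sub_apply, ContinuousLinearMap.comp_apply]
    have := ha₁' μ
    rw [sub_eq_zero]
    exact this.symm.trans (by rfl)
  · -- spanning
    intro M hM
    -- element of A given by restricting M to A₀
    let ιF : A₀ →L[ℂ] F := ι.codRestrict F (fun x => hsub ⟨x, rfl⟩)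
    set aM : StrongDual ℂ A₀ := M.comp ιF with haM
    -- N := M - eval aM vanishes on A₀'
    set N : StrongDual ℂ F := M - (ι' aM).comp F.subtypeL with hN
    have hN0 : ∀ f ∈ A₀', N f = 0 := by
      rintro f ⟨x, hx⟩
      have hfx : f = ιF x := by
        apply Subtype.ext
        exact hx.symm
      simp only [hN, ContinuousLinearMap.sub_apply, ContinuousLinearMap.comp_apply]
      rw [sub_eq_zero, hfx]
      rfl
    obtain ⟨c₀, hc₀⟩ := hrep f₀  -- not needed
    set t : ℂ := N f₀ / Λ f₀ with ht
    have hNt : ∀ f : F, N f = t * Λ f := by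
      intro f
      obtain ⟨c, hc⟩ := hrep f
      rw [hdet N hN0 f c hc, hdet Λ hΛ0 f c hc, ht]
      field_simp
    -- the element aM + t • a₁ annihilates E, hence is zero
    have hb : aM + t • a₁ = 0 := by
      apply hinj
      intro μ
      have h7 : N ⟨μ.1, hEF μ.2⟩ = -(μ.1 aM) := by
        simp only [hN, ContinuousLinearMap.sub_apply, ContinuousLinearMap.comp_apply,
          hM μ, zero_sub]
        rfl
      have h8 : N ⟨μ.1, hEF μ.2⟩ = t * Λ ⟨μ.1, hEF μ.2⟩ := hNt _
      have h9 : μ.1 aM = -(t * Λ ⟨μ.1, hEF μ.2⟩) := by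
        rw [← h8, h7, neg_neg]
      rw [map_add, map_smul, smul_eq_mul, h9, ha₁' μ]
      ring
    refine ⟨t, ?_⟩
    ext f
    have h10 : f.1 (aM + t • a₁) = 0 := by rw [hb]; simp
    rw [map_add, map_smul, smul_eq_mul] at h10
    have h11 : N f = M f - f.1 aM := rfl
    have h12 := hNt f
    rw [h11] at h12
    simp only [ContinuousLinearMap.smul_apply, ContinuousLinearMap.sub_apply,
      ContinuousLinearMap.comp_apply, smul_eq_mul]
    have : (ι' a₁) (F.subtypeL f) = f.1 a₁ := rfl
    rw [this]
    -- M f = t * (Λ f - f.1 a₁)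
    have : M f = f.1 aM + t * Λ f := by linear_combination h12
    rw [this]
    linear_combination h10
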